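/- Let E = E_I ⊔ E_II be a finite set and A a matrix of format E_I × E_II. Define the block matrix L = [[0, A], [−A*, 0]] with respect to this splitting, where A* is the conjugate transpose. Then every principal minor of L is nonnegative: for X ⊆ E with X = P ⊔ Q, P ⊆ E_I, Q ⊆ E_II, one has det L_X = |det A_{P,Q}|² if |P| = |Q| (where A_{P,Q} is the submatrix of A with rows P and columns Q), and det L_X = 0 otherwise. -/

import Mathlib

open Matrix

lemma detJ (m : Type*) [Fintype m] [DecidableEq m] :
    (fromBlocks (0 : Matrix m m ℂ) (1 : Matrix m m ℂ)
      (-1 : Matrix m m ℂ) (0 : Matrix m m ℂ)).det = 1 := by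
  have h : fromBlocks (0 : Matrix m m ℂ) (1 : Matrix m m ℂ)
      (-1 : Matrix m m ℂ) (0 : Matrix m m ℂ) =
      fromBlocks 1 1 0 1 * fromBlocks 1 0 (-1) 1 * fromBlocks 1 1 0 1 := by
    rw [fromBlocks_multiply, fromBlocks_multiply]
    congr 1 <;> simp
  rw [h, det_mul, det_mul]
  simp [det_fromBlocks_zero₂₁, det_fromBlocks_zero₁₂]

lemma detSquare {m : Type*} [Fintype m] [DecidableEq m] (B : Matrix m m ℂ) :
    (fromBlocks 0 B (-Bᴴ) 0).det = B.det * star B.det := by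
  have h : fromBlocks (0 : Matrix m m ℂ) B (-Bᴴ) 0 =
      fromBlocks B 0 0 1 * fromBlocks 0 1 (-1) 0 * fromBlocks Bᴴ 0 0 1 := by
    rw [fromBlocks_multiply, fromBlocks_multiply]
    congr 1 <;> simp
  rw [h, det_mul, det_mul, detJ, det_fromBlocks_zero₂₁, det_fromBlocks_zero₂₁,
    det_conjTranspose, det_one]
  ring

lemma detNonSquare {m n : Type*} [Fintype m] [Fintype n] [DecidableEq m] [DecidableEq n]
    (B : Matrix m n ℂ) (C : Matrix n m ℂ) (h : Fintype.card m ≠ Fintype.card n) :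
    (fromBlocks 0 B C 0).det = 0 := by
  rw [Matrix.det_apply]
  refine Finset.sum_eq_zero fun σ _ => ?_
  rcases eq_or_ne (∏ x, (fromBlocks 0 B C 0) (σ x) x) 0 with hp | hp
  · simp [hp]
  · exfalso
    have hne : ∀ x, (fromBlocks 0 B C 0) (σ x) x ≠ 0 := fun x =>
      Finset.prod_ne_zero_iff.mp hp x (Finset.mem_univ x)
    have hl : ∀ i : m, ∃ j : n, σ (.inl i) = .inr j := by
      intro i
      cases hσ : σ (.inl i) with
      | inl i' =>
        exact absurd (show (fromBlocks 0 B C 0) (σ (.inl i)) (.inl i) = 0 by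
          rw [hσ]; simp [fromBlocks]) (hne _)
      | inr j => exact ⟨j, rfl⟩
    have hr : ∀ j : n, ∃ i : m, σ (.inr j) = .inl i := by
      intro j
      cases hσ : σ (.inr j) with
      | inl i => exact ⟨i, rfl⟩
      | inr j' =>
        exact absurd (show (fromBlocks 0 B C 0) (σ (.inr j)) (.inr j) = 0 by
          rw [hσ]; simp [fromBlocks]) (hne _)
    choose f hf using hl
    choose g hg using hr
    have hfinj : Function.Injective f := fun a b hab => by
      have : σ (.inl a) = σ (.inl b) := by rw [hf a, hf b, hab]
      exact Sum.inl_injective (σ.injective this)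
    have hginj : Function.Injective g := fun a b hab => by
      have : σ (.inr a) = σ (.inr b) := by rw [hg a, hg b, hab]
      exact Sum.inr_injective (σ.injective this)
    exact h (le_antisymm (Fintype.card_le_of_injective f hfinj)
      (Fintype.card_le_of_injective g hginj))

/-- det of [[0,B],[-Bᴴ,0]] over m ⊕ n with an equiv m ≃ n. -/
lemma detSquare' {m n : Type*} [Fintype m] [Fintype n] [DecidableEq m] [DecidableEq n]
    (B : Matrix m n ℂ) (e : m ≃ n) :
    (fromBlocks 0 B (-Bᴴ) 0).det =
      (B.submatrix id e).det * star (B.submatrix id e).det := by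
  have h1 : ((fromBlocks 0 B (-Bᴴ) 0).submatrix
      (Equiv.sumCongr (Equiv.refl m) e) (Equiv.sumCongr (Equiv.refl m) e)).det
      = (fromBlocks 0 B (-Bᴴ) 0).det :=
    Matrix.det_submatrix_equiv_self _ _
  rw [← h1]
  have h2 : (fromBlocks 0 B (-Bᴴ) 0).submatrix
      (Equiv.sumCongr (Equiv.refl m) e) (Equiv.sumCongr (Equiv.refl m) e)
      = fromBlocks 0 (B.submatrix id e) (-(B.submatrix id e)ᴴ) 0 := by
    ext x y
    cases x <;> cases y <;> simp [fromBlocks, conjTranspose, submatrix]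
  rw [h2, detSquare]

/-- For the block matrix `L = [[0, A], [-A*, 0]]`, every principal
minor is nonnegative: for `X = P ⊔ Q`, `det L_X = |det A_{P,Q}|²` when
`|P| = |Q|`, and `det L_X = 0` otherwise. -/
theorem stmt_5 {I J : Type*} [Fintype I] [Fintype J] [DecidableEq I] [DecidableEq J]
    (A : Matrix I J ℂ) (P : Finset I) (Q : Finset J) :
    let L : Matrix (I ⊕ J) (I ⊕ J) ℂ := Matrix.fromBlocks 0 A (-A.conjTranspose) 0
    let X : Finset (I ⊕ J) :=
      P.map ⟨Sum.inl, Sum.inl_injective⟩ ∪ Q.map ⟨Sum.inr, Sum.inr_injective⟩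
    let dX := (L.submatrix (fun a : {s // s ∈ X} => (a : I ⊕ J))
      (fun a : {s // s ∈ X} => (a : I ⊕ J))).det
    (0 ≤ dX.re ∧ dX.im = 0) ∧
    (P.card = Q.card →
      ∀ e : {i // i ∈ P} ≃ {j // j ∈ Q},
        dX = ((‖(A.submatrix (fun p : {i // i ∈ P} => (p : I))
            (fun p : {i // i ∈ P} => ((e p : {j // j ∈ Q}) : J))).det‖ : ℂ)) ^ 2) ∧
    (P.card ≠ Q.card → dX = 0) := by
  intro L X dX
  -- the equivalence between the subtype of X and the sum of subtypes
  set B : Matrix {i // i ∈ P} {j // j ∈ Q} ℂ :=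
    A.submatrix (fun p => (p : I)) (fun q => (q : J)) with hB
  have toX : ∀ a : {i // i ∈ P} ⊕ {j // j ∈ Q}, Sum.elim (fun p : {i // i ∈ P} => Sum.inl (p : I)) (fun q : {j // j ∈ Q} => Sum.inr (q : J)) a ∈ X := by
    rintro (p | q) <;> simp [X]
  let t : {i // i ∈ P} ⊕ {j // j ∈ Q} → {s // s ∈ X} :=
    fun a => ⟨_, toX a⟩
  have htbij : Function.Bijective t := by
    constructor
    · rintro (p | q) (p' | q') h <;>
        simp only [t, Sum.elim_inl, Sum.elim_inr, Subtype.mk.injEq, Sum.inl.injEq,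
          Sum.inr.injEq] at h <;>
      first
        | (exact congrArg Sum.inl (Subtype.ext h))
        | (exact congrArg Sum.inr (Subtype.ext h))
        | (exact absurd h (by simp))
    · rintro ⟨s, hs⟩
      simp only [X, Finset.mem_union, Finset.mem_map, Function.Embedding.coeFn_mk] at hs
      rcases hs with ⟨i, hi, rfl⟩ | ⟨j, hj, rfl⟩
      · exact ⟨Sum.inl ⟨i, hi⟩, rfl⟩
      · exact ⟨Sum.inr ⟨j, hj⟩, rfl⟩
  let ψ : {s // s ∈ X} ≃ ({i // i ∈ P} ⊕ {j // j ∈ Q}) := (Equiv.ofBijective t htbij).symm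
  have hLt : ∀ a b, L ((t a : {s // s ∈ X}) : I ⊕ J) ((t b : {s // s ∈ X}) : I ⊕ J)
      = fromBlocks 0 B (-Bᴴ) 0 a b := by
    rintro (p | p) (q | q) <;>
      simp [t, L, B, fromBlocks, conjTranspose, submatrix]
  have hsub : L.submatrix (fun a : {s // s ∈ X} => (a : I ⊕ J))
      (fun a : {s // s ∈ X} => (a : I ⊕ J))
      = (fromBlocks 0 B (-Bᴴ) 0).submatrix ψ ψ := by
    ext x y
    have hx : t (ψ x) = x := (Equiv.ofBijective t htbij).apply_symm_apply x
    have hy : t (ψ y) = y := (Equiv.ofBijective t htbij).apply_symm_apply y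
    simp only [submatrix_apply]
    have h := hLt (ψ x) (ψ y)
    rw [hx, hy] at h
    exact h
  have hdX : dX = (fromBlocks 0 B (-Bᴴ) 0).det := by
    show (L.submatrix (fun a : {s // s ∈ X} => (a : I ⊕ J))
      (fun a : {s // s ∈ X} => (a : I ⊕ J))).det = _
    rw [hsub, Matrix.det_submatrix_equiv_self]
  have hcardP : Fintype.card {i // i ∈ P} = P.card := Fintype.card_coe P
  have hcardQ : Fintype.card {j // j ∈ Q} = Q.card := Fintype.card_coe Q
  have hsq : ∀ e : {i // i ∈ P} ≃ {j // j ∈ Q},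
      dX = ((‖(A.submatrix (fun p : {i // i ∈ P} => (p : I))
        (fun p : {i // i ∈ P} => ((e p : {j // j ∈ Q}) : J))).det‖ : ℂ)) ^ 2 := by
    intro e
    rw [hdX, detSquare' B e]
    have hBe : B.submatrix id e = A.submatrix (fun p : {i // i ∈ P} => (p : I))
        (fun p : {i // i ∈ P} => ((e p : {j // j ∈ Q}) : J)) := by
      ext x y; simp [B, submatrix]
    rw [hBe]
    set z := (A.submatrix (fun p : {i // i ∈ P} => (p : I))
        (fun p : {i // i ∈ P} => ((e p : {j // j ∈ Q}) : J))).det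
    rw [show ((‖z‖ : ℂ)) ^ 2 = ((‖z‖ ^ 2 : ℝ) : ℂ) by push_cast; ring,
      Complex.sq_norm, ← Complex.mul_conj]
    rfl
  refine ⟨?_, fun _ e => hsq e, fun hne => ?_⟩
  · rcases eq_or_ne P.card Q.card with hc | hc
    · obtain ⟨e⟩ := Fintype.card_eq.mp (by rw [hcardP, hcardQ, hc] :
        Fintype.card {i // i ∈ P} = Fintype.card {j // j ∈ Q})
      rw [hsq e]
      constructor
      · rw [← Complex.ofReal_pow, Complex.ofReal_re]
        positivity
      · rw [← Complex.ofReal_pow, Complex.ofReal_im]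
    · rw [hdX, detNonSquare _ _ (by rw [hcardP, hcardQ]; exact hc)]
      simp
  · rw [hdX, detNonSquare _ _ (by rw [hcardP, hcardQ]; exact hne)]
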